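/- arXiv:1410.1579 — 4 statements merged into one kernel-verified Lean document; each statement's English description precedes it below -/
import Mathlib

section
/- For every integer n ≥ 3 and every directed graph on n vertices having at most 3n − 6 edges (in particular, every orientation of a planar graph on n vertices), the number of directed simple paths is at most n²·3ⁿ. -/
open scoped BigOperators

noncomputable section

/-- Points of the plane. -/
abbrev Pt : Type := ℝ × ℝ

/-- Dot product on the plane. -/
def dotp (a b : Pt) : ℝ := a.1 * b.1 + a.2 * b.2

/-- The geometric conditions making `(V, E)` a plane straight-line graph:
every edge joins two distinct points of `V`, no point of `V` lies in the open
segment of an edge, and the open segments of two distinct edges are disjoint. -/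
def ValidEdges (V : Finset Pt) (E : Finset (Sym2 Pt)) : Prop :=
  (∀ a b : Pt, s(a, b) ∈ E → a ∈ V ∧ b ∈ V ∧ a ≠ b) ∧
  (∀ a b : Pt, s(a, b) ∈ E → ∀ v ∈ V, v ∉ openSegment ℝ a b) ∧
  (∀ a b c d : Pt, s(a, b) ∈ E → s(c, d) ∈ E → s(a, b) ≠ s(c, d) →
    openSegment ℝ a b ∩ openSegment ℝ c d = ∅)

/-- A plane straight-line graph. -/
structure PSLG where
  V : Finset Pt
  E : Finset (Sym2 Pt)
  valid : ValidEdges V E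

/-- A path in `G`: a sequence of at least two vertices, consecutive ones joined by edges. -/
def IsPathIn (G : PSLG) (L : List Pt) : Prop :=
  2 ≤ L.length ∧ L.Chain' (fun a b => s(a, b) ∈ G.E)

/-- An x-monotone path: x-coordinates strictly increasing along the path. -/
def IsXMonotonePath (G : PSLG) (L : List Pt) : Prop :=
  IsPathIn G L ∧ L.Chain' (fun a b => a.1 < b.1)

/-- Monotonicity of a vertex sequence in direction `u`. -/
def MonotoneInDir (u : Pt) (L : List Pt) : Prop :=
  L.Chain' (fun a b => 0 < dotp (b - a) u)

/-- A monotone path: monotone in some direction `u ≠ 0`. -/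
def IsMonotonePath (G : PSLG) (L : List Pt) : Prop :=
  IsPathIn G L ∧ ∃ u : Pt, u ≠ 0 ∧ MonotoneInDir u L

/-- The number of x-monotone paths in `G`. -/
def xMonCount (G : PSLG) : ℕ := Set.ncard {L : List Pt | IsXMonotonePath G L}

/-- The number of monotone paths in `G`, a path and its reversal counted once. -/
def monPathCount (G : PSLG) : ℕ :=
  Set.ncard {P : Set (List Pt) | ∃ L, IsMonotonePath G L ∧ P = {L, L.reverse}}

/-- Consecutive pairs along a cycle (including the wrap-around pair). -/
def cyclePairs (L : List Pt) : List (Pt × Pt) := L.zip (L.rotate 1)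

/-- A cycle in `G`: at least 3 pairwise distinct vertices, cyclically joined by edges. -/
def IsCycleIn (G : PSLG) (L : List Pt) : Prop :=
  3 ≤ L.length ∧ L.Nodup ∧ ∀ p ∈ cyclePairs L, s(p.1, p.2) ∈ G.E

/-- The union of the closed edge segments of a cycle. -/
def cycleBody (L : List Pt) : Set Pt := ⋃ p ∈ cyclePairs L, segment ℝ p.1 p.2

/-- A star-shaped polygon in `G`: a cycle for which some point `o` sees the boundary
in exactly one point along every ray emanating from `o`. -/
def IsStarShapedPolygon (G : PSLG) (L : List Pt) : Prop :=
  IsCycleIn G L ∧ ∃ o : Pt, ∀ d : Pt, d ≠ 0 →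
    ∃! p : Pt, p ∈ cycleBody L ∧ ∃ t : ℝ, 0 ≤ t ∧ p = o + t • d

/-- The edge set of a cycle, used to count polygons. -/
def cycleEdgeSet (L : List Pt) : Finset (Sym2 Pt) :=
  ((cyclePairs L).map (fun p => s(p.1, p.2))).toFinset

/-- The number of star-shaped polygons in `G`, counted by edge sets. -/
def starCount (G : PSLG) : ℕ :=
  Set.ncard {E' : Finset (Sym2 Pt) | ∃ L, IsStarShapedPolygon G L ∧ E' = cycleEdgeSet L}

/-- Cross product (signed area). -/
def crossp (a b : Pt) : ℝ := a.1 * b.2 - a.2 * b.1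

/-- A convex polygon in `G`: a cycle whose vertices are in strictly convex position and
appear along the cycle in their convex-hull cyclic order; equivalently, for every directed
edge of the cycle all other vertices lie strictly on the same (left or right) side. -/
def IsConvexPolygon (G : PSLG) (L : List Pt) : Prop :=
  IsCycleIn G L ∧
  ((∀ p ∈ cyclePairs L, ∀ v ∈ L, v ≠ p.1 → v ≠ p.2 → 0 < crossp (p.2 - p.1) (v - p.1)) ∨
   (∀ p ∈ cyclePairs L, ∀ v ∈ L, v ≠ p.1 → v ≠ p.2 → crossp (p.2 - p.1) (v - p.1) < 0))

/-- The number of convex polygons in `G`, counted by edge sets. -/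
def convexCount (G : PSLG) : ℕ :=
  Set.ncard {E' : Finset (Sym2 Pt) | ∃ L, IsConvexPolygon G L ∧ E' = cycleEdgeSet L}

/-- A triangulation: an edge-maximal plane straight-line graph. -/
def PSLG.IsTriangulation (G : PSLG) : Prop :=
  ∀ a ∈ G.V, ∀ b ∈ G.V, a ≠ b → s(a, b) ∉ G.E → ¬ ValidEdges G.V (insert s(a, b) G.E)

/-- An orientation of a PSLG: each edge `{a, b}` receives exactly one of the ordered
pairs `(a, b)`, `(b, a)`. -/
def IsOrientation (G : PSLG) (D : Finset (Pt × Pt)) : Prop :=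
  (∀ p ∈ D, s(p.1, p.2) ∈ G.E) ∧
  ∀ a b : Pt, s(a, b) ∈ G.E →
    (((a, b) ∈ D ∧ (b, a) ∉ D) ∨ ((b, a) ∈ D ∧ (a, b) ∉ D))

/-- A directed simple path in a directed graph on points. -/
def IsDirPath (D : Finset (Pt × Pt)) (L : List Pt) : Prop :=
  2 ≤ L.length ∧ L.Nodup ∧ L.Chain' (fun a b => (a, b) ∈ D)

/-- The number of directed simple paths. -/
def dirPathCount (D : Finset (Pt × Pt)) : ℕ := Set.ncard {L : List Pt | IsDirPath D L}

/-- No three of the points of `S` are collinear. -/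
def NoThreeCollinear (S : Finset Pt) : Prop :=
  ∀ p ∈ S, ∀ q ∈ S, ∀ r ∈ S, p ≠ q → p ≠ r → q ≠ r → ¬ Collinear ℝ ({p, q, r} : Set Pt)

/-- A maximal monotone path: not a proper subpath (up to reversal) of another
monotone path of `G`. -/
def IsMaximalMonotonePath (G : PSLG) (L : List Pt) : Prop :=
  IsMonotonePath G L ∧ ∀ M : List Pt, IsMonotonePath G M →
    (L <:+: M ∨ L.reverse <:+: M) → (L = M ∨ L.reverse = M)

namespace DirPathsAux

open Finset

variable {n : ℕ}

/-- out-degree of `v` in `E`. -/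
def deg (E : Finset (Fin n × Fin n)) (v : Fin n) : ℕ :=
  (E.filter (fun p => p.1 = v)).card

/-- the digraph with all edges touching `s` removed. -/
def del (E : Finset (Fin n × Fin n)) (s : Fin n) : Finset (Fin n × Fin n) :=
  E.filter (fun p => p.1 ≠ s ∧ p.2 ≠ s)

/-- out-neighbourhood. -/
def outs (E : Finset (Fin n × Fin n)) (s : Fin n) : Finset (Fin n) :=
  (E.filter (fun p => p.1 = s)).image Prod.snd

def PathsFrom (E : Finset (Fin n × Fin n)) (s : Fin n) : Set (List (Fin n)) :=
  {L | 2 ≤ L.length ∧ L.Nodup ∧ L.Chain' (fun a b => (a, b) ∈ E) ∧ L.head? = some s}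

lemma nodup_finite : {L : List (Fin n) | L.Nodup}.Finite := by
  apply (List.finite_length_le (Fin n) n).subset
  intro L hL
  simpa using hL.length_le_card

lemma pathsFrom_finite (E : Finset (Fin n × Fin n)) (s : Fin n) :
    (PathsFrom E s).Finite :=
  nodup_finite.subset fun L hL => hL.2.1

lemma ncard_biUnion_le {β γ : Type*} [DecidableEq β] (F : Finset β) (f : β → Set γ) :
    (⋃ a ∈ F, f a).ncard ≤ ∑ a ∈ F, (f a).ncard := by
  classical
  induction F using Finset.induction with
  | empty => simp
  | insert _ _ h ih =>
    rename_i a F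
    rw [Finset.set_biUnion_insert, Finset.sum_insert h]
    exact (Set.ncard_union_le _ _).trans (by omega)

lemma deg_del_le (E : Finset (Fin n × Fin n)) (s v : Fin n) :
    deg (del E s) v ≤ deg E v := by
  apply Finset.card_le_card
  intro p hp
  simp only [del, Finset.mem_filter] at hp ⊢
  exact ⟨hp.1.1, hp.2⟩

lemma deg_del_self (E : Finset (Fin n × Fin n)) (s : Fin n) :
    deg (del E s) s = 0 := by
  rw [deg, Finset.card_eq_zero, Finset.filter_eq_empty_iff]
  intro p hp
  simp only [del, Finset.mem_filter] at hp
  exact hp.2.1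

lemma chain'_del {E : Finset (Fin n × Fin n)} {s : Fin n} :
    ∀ {M : List (Fin n)}, s ∉ M → M.Chain' (fun a b => (a, b) ∈ E) →
      M.Chain' (fun a b => (a, b) ∈ del E s)
  | [], _, _ => List.isChain_nil
  | [_], _, _ => List.isChain_singleton _
  | x :: y :: t, hs, hch => by
    simp only [List.Chain', List.isChain_cons_cons] at hch ⊢
    refine ⟨?_, chain'_del (fun h => hs (List.mem_cons_of_mem _ h)) hch.2⟩
    simp only [del, Finset.mem_filter]
    exact ⟨hch.1, fun h => hs (h ▸ List.mem_cons_self),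
      fun h => hs (by simp [h])⟩

lemma step_subset (E : Finset (Fin n × Fin n)) (s : Fin n) :
    PathsFrom E s ⊆ (fun M => s :: M) ''
      (⋃ a ∈ outs E s, ({[a]} ∪ PathsFrom (del E s) a)) := by
  rintro L ⟨hlen, hnd, hch, hhd⟩
  match L with
  | x :: y :: t =>
    have hx : x = s := by simpa using hhd
    subst hx
    have hch' := List.isChain_cons_cons.mp hch
    have hsy : (x, y) ∈ E := hch'.1
    have hsnot : x ∉ y :: t := (List.nodup_cons.mp hnd).1
    have hy : y ∈ outs E x := by
      simp only [outs, Finset.mem_image, Finset.mem_filter]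
      exact ⟨(x, y), ⟨hsy, rfl⟩, rfl⟩
    refine ⟨y :: t, ?_, rfl⟩
    rw [Set.mem_iUnion₂]
    refine ⟨y, hy, ?_⟩
    · match t with
      | [] => exact Or.inl rfl
      | z :: t' =>
        refine Or.inr ⟨by simp, (List.nodup_cons.mp hnd).2, ?_, rfl⟩
        exact chain'_del hsnot hch'.2

lemma ncard_step (E : Finset (Fin n × Fin n)) (s : Fin n) :
    (PathsFrom E s).ncard ≤ ∑ a ∈ outs E s, (1 + (PathsFrom (del E s) a).ncard) := by
  have hfin : (⋃ a ∈ outs E s, ({[a]} ∪ PathsFrom (del E s) a)).Finite :=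
    Set.Finite.biUnion (outs E s).finite_toSet
      (fun a _ => (Set.finite_singleton _).union (pathsFrom_finite _ _))
  calc (PathsFrom E s).ncard
      ≤ ((fun M => s :: M) '' (⋃ a ∈ outs E s, ({[a]} ∪ PathsFrom (del E s) a))).ncard :=
        Set.ncard_le_ncard (step_subset E s) (hfin.image _)
    _ ≤ (⋃ a ∈ outs E s, ({[a]} ∪ PathsFrom (del E s) a)).ncard :=
        Set.ncard_image_le hfin
    _ ≤ ∑ a ∈ outs E s, (({[a]} : Set (List (Fin n))) ∪ PathsFrom (del E s) a).ncard :=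
        ncard_biUnion_le _ _
    _ ≤ ∑ a ∈ outs E s, (1 + (PathsFrom (del E s) a).ncard) := by
        apply Finset.sum_le_sum
        intro a _
        exact (Set.ncard_union_le _ _).trans (by simp)

lemma key : ∀ (m : ℕ) (E : Finset (Fin n × Fin n)), E.card ≤ m → ∀ s : Fin n,
    (PathsFrom E s).ncard ≤
      deg E s * (E.card * ∏ v ∈ Finset.univ.erase s, max (deg E v) 1) := by
  intro m
  induction m with
  | zero =>
    intro E hE s
    have : E = ∅ := Finset.card_eq_zero.mp (Nat.le_zero.mp hE)
    subst this
    have h0 : outs (∅ : Finset (Fin n × Fin n)) s = ∅ := by simp [outs]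
    have h := ncard_step (∅ : Finset (Fin n × Fin n)) s
    rw [h0, Finset.sum_empty] at h
    exact h.trans (Nat.zero_le _)
  | succ m ih =>
    intro E hE s
    by_cases houts : outs E s = ∅
    · have h := ncard_step E s
      rw [houts, Finset.sum_empty] at h
      exact h.trans (Nat.zero_le _)
    · obtain ⟨a₀, ha₀⟩ := Finset.nonempty_iff_ne_empty.mpr houts
      -- `del E s` is strictly smaller
      obtain ⟨p, hp, _⟩ : ∃ p ∈ E.filter (fun p => p.1 = s), p.2 = a₀ := by
        simpa [outs] using ha₀
      have hpE : p ∈ E := (Finset.mem_filter.mp hp).1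
      have hp1 : p.1 = s := (Finset.mem_filter.mp hp).2
      have hpnot : p ∉ del E s := by
        simp only [del, Finset.mem_filter]
        rintro ⟨-, h, -⟩
        exact h hp1
      have hlt : (del E s).card < E.card :=
        Finset.card_lt_card ⟨Finset.filter_subset _ _, fun hsub => hpnot (hsub hpE)⟩
      have hdel : (del E s).card ≤ m := by omega
      set P : ℕ := ∏ v ∈ Finset.univ.erase s, max (deg E v) 1 with hP
      have hP1 : 1 ≤ P := Finset.one_le_prod' (fun v _ => le_max_right _ _)
      have hterm : ∀ a : Fin n, 1 + (PathsFrom (del E s) a).ncard ≤ E.card * P := by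
        intro a
        have h1 := ih (del E s) hdel a
        -- deg (del E s) a * ∏_{v ≠ a} ≤ ∏_{v ≠ s} (over del)
        have h2 : deg (del E s) a * ∏ v ∈ Finset.univ.erase a, max (deg (del E s) v) 1
            ≤ ∏ v ∈ Finset.univ.erase s, max (deg (del E s) v) 1 := by
          have e1 : max (deg (del E s) a) 1 * ∏ v ∈ Finset.univ.erase a, max (deg (del E s) v) 1
              = ∏ v ∈ Finset.univ, max (deg (del E s) v) 1 :=
            Finset.mul_prod_erase Finset.univ (fun v => max (deg (del E s) v) 1) (Finset.mem_univ a)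
          have e2 : max (deg (del E s) s) 1 * ∏ v ∈ Finset.univ.erase s, max (deg (del E s) v) 1
              = ∏ v ∈ Finset.univ, max (deg (del E s) v) 1 :=
            Finset.mul_prod_erase Finset.univ (fun v => max (deg (del E s) v) 1) (Finset.mem_univ s)
          have e3 : max (deg (del E s) s) 1 = 1 := by simp [deg_del_self]
          calc deg (del E s) a * ∏ v ∈ Finset.univ.erase a, max (deg (del E s) v) 1
              ≤ max (deg (del E s) a) 1 * ∏ v ∈ Finset.univ.erase a, max (deg (del E s) v) 1 :=
                Nat.mul_le_mul_right _ (le_max_left _ _)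
            _ = ∏ v ∈ Finset.univ, max (deg (del E s) v) 1 := e1
            _ = max (deg (del E s) s) 1 * ∏ v ∈ Finset.univ.erase s, max (deg (del E s) v) 1 :=
                e2.symm
            _ = ∏ v ∈ Finset.univ.erase s, max (deg (del E s) v) 1 := by rw [e3, one_mul]
        have h3 : ∏ v ∈ Finset.univ.erase s, max (deg (del E s) v) 1 ≤ P := by
          apply Finset.prod_le_prod'
          intro v _
          exact max_le_max (deg_del_le E s v) le_rfl
        have h4 : (PathsFrom (del E s) a).ncard ≤ (del E s).card * P := by
          calc (PathsFrom (del E s) a).ncard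
              ≤ deg (del E s) a * ((del E s).card *
                  ∏ v ∈ Finset.univ.erase a, max (deg (del E s) v) 1) := h1
            _ = (del E s).card * (deg (del E s) a *
                  ∏ v ∈ Finset.univ.erase a, max (deg (del E s) v) 1) := by ring
            _ ≤ (del E s).card * P :=
                Nat.mul_le_mul_left _ (h2.trans h3)
        have h5 : (del E s).card * P + 1 ≤ E.card * P := by
          have : ((del E s).card + 1) * P ≤ E.card * P :=
            Nat.mul_le_mul_right _ (by omega)
          nlinarith
        omega
      calc (PathsFrom E s).ncard
          ≤ ∑ a ∈ outs E s, (1 + (PathsFrom (del E s) a).ncard) := ncard_step E s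
        _ ≤ ∑ _a ∈ outs E s, E.card * P := Finset.sum_le_sum (fun a _ => hterm a)
        _ = (outs E s).card * (E.card * P) := by rw [Finset.sum_const, smul_eq_mul]
        _ ≤ deg E s * (E.card * P) :=
            Nat.mul_le_mul_right _ (Finset.card_image_le)

lemma cube_le (d : ℕ) : (max d 1) ^ 3 ≤ 3 ^ d := by
  induction d with
  | zero => simp
  | succ k ih =>
    rcases Nat.lt_or_ge k 3 with h | h
    · interval_cases k <;> norm_num
    · have hk : max k 1 = k := max_eq_left (by omega)
      have hk1 : max (k + 1) 1 = k + 1 := max_eq_left (by omega)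
      have hkk : 3 * k ≤ k * k := Nat.mul_le_mul_right k h
      have h1 : (k + 1) ^ 3 ≤ 3 * k ^ 3 := by nlinarith [hkk, h]
      calc (max (k + 1) 1) ^ 3 = (k + 1) ^ 3 := by rw [hk1]
        _ ≤ 3 * k ^ 3 := h1
        _ = 3 * (max k 1) ^ 3 := by rw [hk]
        _ ≤ 3 * 3 ^ k := Nat.mul_le_mul_left _ ih
        _ = 3 ^ (k + 1) := (pow_succ 3 k).symm ▸ (by ring)

lemma sum_deg (E : Finset (Fin n × Fin n)) :
    ∑ v ∈ Finset.univ, deg E v = E.card := by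
  exact (Finset.card_eq_sum_card_fiberwise (f := Prod.fst) (fun p _ => Finset.mem_univ _)).symm

end DirPathsAux

/-- a directed graph on `n ≥ 3` vertices with at most `3n − 6` edges
has at most `n²·3ⁿ` directed simple paths. -/
theorem directed_paths_upper_bound (n : ℕ) (hn : 3 ≤ n)
    (E : Finset (Fin n × Fin n)) (hne : ∀ p ∈ E, p.1 ≠ p.2)
    (hcard : E.card ≤ 3 * n - 6) :
    Set.ncard {L : List (Fin n) |
        2 ≤ L.length ∧ L.Nodup ∧ L.Chain' (fun a b => (a, b) ∈ E)} ≤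
      n ^ 2 * 3 ^ n := by
  classical
  open DirPathsAux in
  set S := {L : List (Fin n) |
      2 ≤ L.length ∧ L.Nodup ∧ L.Chain' (fun a b => (a, b) ∈ E)} with hS
  have hsub : S ⊆ ⋃ s ∈ (Finset.univ : Finset (Fin n)), PathsFrom E s := by
    intro L hL
    obtain ⟨hlen, hnd, hch⟩ := hL
    match L with
    | [] => simp at hlen
    | x :: t =>
      rw [Set.mem_iUnion₂]
      exact ⟨x, Finset.mem_univ x, hlen, hnd, hch, rfl⟩
  have hfin : (⋃ s ∈ (Finset.univ : Finset (Fin n)), PathsFrom E s).Finite :=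
    Set.Finite.biUnion (Finset.univ : Finset (Fin n)).finite_toSet
      (fun s _ => pathsFrom_finite E s)
  have h1 : S.ncard ≤ ∑ s ∈ Finset.univ, (PathsFrom E s).ncard :=
    (Set.ncard_le_ncard hsub hfin).trans (ncard_biUnion_le _ _)
  set Q : ℕ := ∏ v ∈ Finset.univ, max (deg E v) 1 with hQ
  have h2 : ∀ s : Fin n, (PathsFrom E s).ncard ≤ E.card * Q := by
    intro s
    have hk := key E.card E le_rfl s
    have hds : deg E s * ∏ v ∈ Finset.univ.erase s, max (deg E v) 1 ≤ Q := by
      calc deg E s * ∏ v ∈ Finset.univ.erase s, max (deg E v) 1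
          ≤ max (deg E s) 1 * ∏ v ∈ Finset.univ.erase s, max (deg E v) 1 :=
            Nat.mul_le_mul_right _ (le_max_left _ _)
        _ = Q := Finset.mul_prod_erase Finset.univ (fun v => max (deg E v) 1)
            (Finset.mem_univ s)
    calc (PathsFrom E s).ncard
        ≤ deg E s * (E.card * ∏ v ∈ Finset.univ.erase s, max (deg E v) 1) := hk
      _ = E.card * (deg E s * ∏ v ∈ Finset.univ.erase s, max (deg E v) 1) := by ring
      _ ≤ E.card * Q := Nat.mul_le_mul_left _ hds
  have h3 : S.ncard ≤ n * (E.card * Q) := by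
    calc S.ncard ≤ ∑ s ∈ Finset.univ, (PathsFrom E s).ncard := h1
      _ ≤ ∑ _s ∈ (Finset.univ : Finset (Fin n)), E.card * Q :=
          Finset.sum_le_sum (fun s _ => h2 s)
      _ = n * (E.card * Q) := by
          rw [Finset.sum_const, smul_eq_mul, Finset.card_univ, Fintype.card_fin]
  have hQ3 : Q ^ 3 ≤ 3 ^ E.card := by
    calc Q ^ 3 = ∏ v ∈ Finset.univ, (max (deg E v) 1) ^ 3 := by
          rw [← Finset.prod_pow]
      _ ≤ ∏ v ∈ Finset.univ, 3 ^ deg E v :=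
          Finset.prod_le_prod' (fun v _ => cube_le _)
      _ = 3 ^ (∑ v ∈ Finset.univ, deg E v) := by rw [Finset.prod_pow_eq_pow_sum]
      _ = 3 ^ E.card := by rw [sum_deg]
  have hQle : Q ≤ 3 ^ (n - 2) := by
    have h' : Q ^ 3 ≤ (3 ^ (n - 2)) ^ 3 := by
      calc Q ^ 3 ≤ 3 ^ E.card := hQ3
        _ ≤ 3 ^ (3 * (n - 2)) := Nat.pow_le_pow_right (by norm_num) (by omega)
        _ = (3 ^ (n - 2)) ^ 3 := by rw [← pow_mul, Nat.mul_comm]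
    exact (Nat.pow_le_pow_iff_left (by norm_num : (3:ℕ) ≠ 0)).mp h'
  calc S.ncard ≤ n * (E.card * Q) := h3
    _ ≤ n * ((3 * n) * 3 ^ (n - 2)) :=
        Nat.mul_le_mul_left _ (Nat.mul_le_mul (by omega) hQle)
    _ = n ^ 2 * (3 * 3 ^ (n - 2)) := by ring
    _ = n ^ 2 * 3 ^ (n - 1) := by
        have h21 : n - 2 + 1 = n - 1 := by omega
        rw [← pow_succ', h21]
    _ ≤ n ^ 2 * 3 ^ n :=
        Nat.mul_le_mul_left _ (Nat.pow_le_pow_right (by norm_num) (by omega))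

end
end

section
/- For all real numbers x and y with 1 ≤ x ≤ y, one has (3y/x)^x ≤ 3^y; that is, the function x ↦ (3n/x)^x attains its maximum over the interval [1, n] at x = n, where its value is 3ⁿ. -/
open scoped BigOperators

noncomputable section

/-- for real `1 ≤ x ≤ y`, `(3y/x)^x ≤ 3^y` (real powers). -/
theorem rpow_three_bound (x y : ℝ) (hx : 1 ≤ x) (hxy : x ≤ y) :
    Real.rpow (3 * y / x) x ≤ Real.rpow 3 y := by
  have hx0 : (0:ℝ) < x := lt_of_lt_of_le zero_lt_one hx
  have hy0 : (0:ℝ) < y := lt_of_lt_of_le hx0 hxy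
  have h3 : (0:ℝ) < 3 * y / x := by positivity
  have hlog3 : (1:ℝ) ≤ Real.log 3 := by
    rw [Real.le_log_iff_exp_le (by norm_num)]
    have := Real.exp_one_lt_d9
    linarith
  have hratio : Real.log (y / x) ≤ y / x - 1 :=
    Real.log_le_sub_one_of_pos (by positivity)
  have hsplit : Real.log (3 * y / x) = Real.log 3 + Real.log (y / x) := by
    rw [mul_div_assoc, Real.log_mul (by norm_num) (by positivity)]
  have hkey : x * Real.log (3 * y / x) ≤ y * Real.log 3 := by
    rw [hsplit]
    have h1 : x * Real.log (y / x) ≤ y - x := by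
      have := mul_le_mul_of_nonneg_left hratio (le_of_lt hx0)
      calc x * Real.log (y / x) ≤ x * (y / x - 1) := this
        _ = y - x := by field_simp
    nlinarith
  show (3 * y / x) ^ x ≤ (3:ℝ) ^ y
  rw [Real.rpow_def_of_pos h3, Real.rpow_def_of_pos (by norm_num : (0:ℝ) < 3),
    Real.exp_le_exp]
  linarith [hkey]

end
end

section
/- Define 2×2 real matrices by M₂ = [[2,1],[1,1]] and M_k = M_{k−1}² + [[1,0],[1,1]] for k ≥ 3. Then the real number λ = (4885 + 9·√294153)/2 is an eigenvalue of M₅ (equivalently, λ² − 4885·λ + 9208 = 0, where trace M₅ = 4885 and det M₅ = 9208), and λ > 1.7003¹⁶. -/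
open scoped BigOperators

noncomputable section

/-- for the transfer matrices `M₂ = [[2,1],[1,1]]`,
`M_k = M_{k−1}² + [[1,0],[1,1]]`, the number `λ = (4885 + 9√294153)/2` is an eigenvalue
of `M₅` (with `trace M₅ = 4885`, `det M₅ = 9208`, so `λ² − 4885λ + 9208 = 0`), and
`λ > 1.7003¹⁶`. -/
theorem transfer_matrix_eigenvalue (M : ℕ → Matrix (Fin 2) (Fin 2) ℝ)
    (h2 : M 2 = !![2, 1; 1, 1])
    (hrec : ∀ k, 3 ≤ k → M k = (M (k - 1)) ^ 2 + !![1, 0; 1, 1]) :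
    (Matrix.trace (M 5) = 4885 ∧ Matrix.det (M 5) = 9208) ∧
    ((4885 + 9 * Real.sqrt 294153) / 2) ^ 2 -
        4885 * ((4885 + 9 * Real.sqrt 294153) / 2) + 9208 = 0 ∧
    (∃ v : Fin 2 → ℝ, v ≠ 0 ∧
      (M 5).mulVec v = ((4885 + 9 * Real.sqrt 294153) / 2) • v) ∧
    (1.7003 : ℝ) ^ (16 : ℕ) < (4885 + 9 * Real.sqrt 294153) / 2 := by
  have hs : Real.sqrt 294153 ^ 2 = 294153 := Real.sq_sqrt (by norm_num)
  have hsnn : (0:ℝ) ≤ Real.sqrt 294153 := Real.sqrt_nonneg _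
  have hslb : (541.67 : ℝ) < Real.sqrt 294153 := by
    nlinarith [hs, hsnn]
  have h3 : M 3 = !![6, 3; 4, 3] := by
    rw [hrec 3 (by norm_num)]
    norm_num [h2, pow_two]
  have h4 : M 4 = !![49, 27; 37, 22] := by
    rw [hrec 4 (by norm_num)]
    norm_num [h3, pow_two]
  have h5 : M 5 = !![3401, 1917; 2628, 1484] := by
    rw [hrec 5 (by norm_num)]
    norm_num [h4, pow_two]
  set l : ℝ := (4885 + 9 * Real.sqrt 294153) / 2 with hl
  have hquad : l ^ 2 - 4885 * l + 9208 = 0 := by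
    rw [hl]; nlinarith [hs]
  refine ⟨⟨?_, ?_⟩, hquad, ?_, ?_⟩
  · rw [h5, Matrix.trace_fin_two_of]; norm_num
  · rw [h5, Matrix.det_fin_two_of]; norm_num
  · refine ⟨![1917, l - 3401], ?_, ?_⟩
    · intro h
      have := congrFun h 0
      simp at this
    · rw [h5]
      funext i
      fin_cases i <;>
        simp [Matrix.mulVec, dotProduct, Fin.sum_univ_two] <;> nlinarith [hquad]
  · have h16 : (1.7003 : ℝ) ^ (16 : ℕ) < 4880 := by norm_num
    have : (4880 : ℝ) < l := by rw [hl]; nlinarith [hslb]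
    linarith

end
end

section
/- For every integer n ≥ 3 there exist a set of n points in ℝ², a triangulation T of it, and an orientation of the edges of T such that the oriented graph contains exactly 3n − 5 directed simple paths (namely 2n − 3 paths of length 1 and n − 2 paths of length 2, and no longer directed paths). -/
open scoped BigOperators

noncomputable section

namespace DT

def P (i : ℕ) : Pt := ((i:ℝ), (i:ℝ)^2)

lemma P_inj : Function.Injective P := by
  intro i j h
  have : (i:ℝ) = j := congrArg Prod.fst h
  exact_mod_cast this

lemma chord_mem {a b : ℝ} {z : Pt} (h : z ∈ openSegment ℝ ((a, a^2) : Pt) ((b, b^2) : Pt)) :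
    ∃ t : ℝ, 0 < t ∧ t < 1 ∧ z.1 = (1-t)*a + t*b ∧ z.2 = (1-t)*a^2 + t*b^2 := by
  rw [openSegment_eq_image] at h
  obtain ⟨t, ht, hz⟩ := h
  refine ⟨t, ht.1, ht.2, ?_, ?_⟩
  · rw [← hz]; simp [Prod.smul_fst]
  · rw [← hz]; simp [Prod.smul_snd]

lemma chord_facts {a b : ℝ} {z : Pt} (hab : a < b)
    (h : z ∈ openSegment ℝ ((a, a^2) : Pt) ((b, b^2) : Pt)) :
    a < z.1 ∧ z.1 < b ∧ z.2 = (a+b)*z.1 - a*b := by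
  obtain ⟨t, ht0, ht1, h1, h2⟩ := chord_mem h
  refine ⟨?_, ?_, ?_⟩ <;> nlinarith

lemma chord_mk {a b : ℝ} {t : ℝ} (ht0 : 0 < t) (ht1 : t < 1) :
    (((1-t)*a + t*b, (1-t)*a^2 + t*b^2) : Pt) ∈ openSegment ℝ ((a, a^2) : Pt) ((b, b^2) : Pt) := by
  rw [openSegment_eq_image]
  exact ⟨t, ⟨ht0, ht1⟩, by simp [Prod.smul_fst, Prod.smul_snd, Prod.ext_iff]⟩

lemma no_pt_in_chord {a b j : ℝ} (hab : a ≠ b) :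
    ((j, j^2) : Pt) ∉ openSegment ℝ ((a, a^2) : Pt) ((b, b^2) : Pt) := by
  intro h
  obtain ⟨t, ht0, ht1, h1, h2⟩ := chord_mem h
  simp only at h1 h2
  have key : t * (1-t) * (a-b)^2 = 0 := by
    linear_combination (j + (1-t)*a + t*b) * h1 - h2
  have h4 : a - b ≠ 0 := sub_ne_zero.mpr hab
  have h3 : (a-b)^2 > 0 := by positivity
  nlinarith [mul_pos (mul_pos ht0 (by linarith : (0:ℝ) < 1 - t)) h3]

end DT

namespace DT

-- Edge/vertex structures
def fanE (n : ℕ) : Finset (Sym2 Pt) := (Finset.Ico 1 n).image (fun i => s(P 0, P i))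
def chainE (n : ℕ) : Finset (Sym2 Pt) := (Finset.Ico 1 (n-1)).image (fun i => s(P i, P (i+1)))
def E (n : ℕ) : Finset (Sym2 Pt) := fanE n ∪ chainE n
def V (n : ℕ) : Finset Pt := (Finset.range n).image P

lemma mem_E_iff {n : ℕ} {e : Sym2 Pt} : e ∈ E n ↔
    (∃ k, 1 ≤ k ∧ k < n ∧ e = s(P 0, P k)) ∨
    (∃ i, 1 ≤ i ∧ i + 1 < n ∧ e = s(P i, P (i+1))) := by
  simp only [E, Finset.mem_union, fanE, chainE, Finset.mem_image, Finset.mem_Ico]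
  constructor
  · rintro (⟨k, ⟨h1, h2⟩, rfl⟩ | ⟨i, ⟨h1, h2⟩, rfl⟩)
    · exact Or.inl ⟨k, h1, h2, rfl⟩
    · exact Or.inr ⟨i, h1, by omega, rfl⟩
  · rintro (⟨k, h1, h2, rfl⟩ | ⟨i, h1, h2, rfl⟩)
    · exact Or.inl ⟨k, ⟨h1, h2⟩, rfl⟩
    · exact Or.inr ⟨i, ⟨h1, by omega⟩, rfl⟩

lemma P_mem_V {n i : ℕ} (h : i < n) : P i ∈ V n :=
  Finset.mem_image_of_mem P (Finset.mem_range.mpr h)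

lemma mem_V_iff {n : ℕ} {v : Pt} : v ∈ V n ↔ ∃ i, i < n ∧ v = P i := by
  simp only [V, Finset.mem_image, Finset.mem_range]
  constructor
  · rintro ⟨i, h, rfl⟩; exact ⟨i, h, rfl⟩
  · rintro ⟨i, h, rfl⟩; exact ⟨i, h, rfl⟩

lemma P_eq_chord (i : ℕ) : P i = (((i:ℝ)), ((i:ℝ))^2) := rfl

-- open segment of edges viewed as chords
lemma openSeg_P {i j : ℕ} : openSegment ℝ (P i) (P j)
    = openSegment ℝ (((i:ℝ), (i:ℝ)^2) : Pt) (((j:ℝ), (j:ℝ)^2) : Pt) := rfl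

lemma no_vertex_in_edge {i j m : ℕ} (hij : i ≠ j) : P m ∉ openSegment ℝ (P i) (P j) := by
  rw [openSeg_P, P_eq_chord]
  exact no_pt_in_chord (by exact_mod_cast fun h => hij (Nat.cast_injective h))

end DT

namespace DT

lemma fan_fan_disj {j k : ℕ} (hj : 1 ≤ j) (hk : 1 ≤ k) (hjk : j ≠ k) :
    openSegment ℝ (P 0) (P j) ∩ openSegment ℝ (P 0) (P k) = ∅ := by
  ext z
  simp only [Set.mem_inter_iff, Set.mem_empty_iff_false, iff_false, not_and]
  intro h1 h2
  rw [openSeg_P] at h1 h2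
  have f1 := chord_facts (by exact_mod_cast hj : ((0:ℕ):ℝ) < (j:ℝ)) h1
  have f2 := chord_facts (by exact_mod_cast hk : ((0:ℕ):ℝ) < (k:ℝ)) h2
  have hjk' : (j:ℝ) ≠ (k:ℝ) := by exact_mod_cast hjk
  push_cast at f1 f2
  obtain ⟨a1, a2, a3⟩ := f1
  obtain ⟨b1, b2, b3⟩ := f2
  have : (j:ℝ) * z.1 = (k:ℝ) * z.1 := by linarith [a3, b3]
  have hz : z.1 ≠ 0 := by linarith
  exact hjk' (mul_right_cancel₀ hz this)

lemma chain_chain_disj {i j : ℕ} (hij : i ≠ j) :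
    openSegment ℝ (P i) (P (i+1)) ∩ openSegment ℝ (P j) (P (j+1)) = ∅ := by
  ext z
  simp only [Set.mem_inter_iff, Set.mem_empty_iff_false, iff_false, not_and]
  intro h1 h2
  rw [openSeg_P] at h1 h2
  have f1 := chord_facts (by push_cast; linarith : ((i:ℝ)) < ((i+1:ℕ):ℝ)) h1
  have f2 := chord_facts (by push_cast; linarith : ((j:ℝ)) < ((j+1:ℕ):ℝ)) h2
  push_cast at f1 f2
  rcases Nat.lt_or_ge i j with h | h
  · have : (i:ℝ) + 1 ≤ j := by exact_mod_cast h
    linarith [f1.2.1, f2.1]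
  · have hj : j < i := by omega
    have : (j:ℝ) + 1 ≤ i := by exact_mod_cast hj
    linarith [f2.2.1, f1.1]

lemma fan_chain_disj {k i : ℕ} (hk : 1 ≤ k) (hi : 1 ≤ i) :
    openSegment ℝ (P 0) (P k) ∩ openSegment ℝ (P i) (P (i+1)) = ∅ := by
  ext z
  simp only [Set.mem_inter_iff, Set.mem_empty_iff_false, iff_false, not_and]
  intro h1 h2
  rw [openSeg_P] at h1 h2
  have f1 := chord_facts (by exact_mod_cast hk : ((0:ℕ):ℝ) < (k:ℝ)) h1
  have f2 := chord_facts (by push_cast; linarith : ((i:ℝ)) < ((i+1:ℕ):ℝ)) h2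
  push_cast at f1 f2
  obtain ⟨a1, a2, a3⟩ := f1
  obtain ⟨b1, b2, b3⟩ := f2
  have hi' : (1:ℝ) ≤ (i:ℝ) := by exact_mod_cast hi
  rcases Nat.lt_or_ge i k with h | h
  · -- k ≥ i+1
    have hik : (i:ℝ) + 1 ≤ (k:ℝ) := by exact_mod_cast h
    nlinarith [mul_pos (show (0:ℝ) < (i:ℝ)+1 - z.1 by linarith) (show (0:ℝ) < z.1 - i by linarith),
      mul_nonneg (show (0:ℝ) ≤ (i:ℝ)+1 - z.1 by linarith) (show (0:ℝ) ≤ (k:ℝ) - i - 1 by linarith),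
      mul_nonneg (show (0:ℝ) ≤ z.1 - i by linarith) (show (0:ℝ) ≤ (k:ℝ) - i - 1 by linarith),
      mul_pos (show (0:ℝ) < (i:ℝ)+1 - z.1 by linarith) (show (0:ℝ) < (k:ℝ) - i by linarith)]
  · -- k ≤ i
    have : (k:ℝ) ≤ i := by exact_mod_cast h
    linarith [a2, b1]

end DT

namespace DT

lemma seg_of_eq {a b : Pt} {x y : Pt} (h : s(a,b) = s(x, y)) :
    openSegment ℝ a b = openSegment ℝ x y := by
  rcases Sym2.eq_iff.mp h with ⟨rfl, rfl⟩ | ⟨rfl, rfl⟩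
  · rfl
  · exact (openSegment_symm ℝ b a).symm

lemma valid_E {n : ℕ} (hn : 3 ≤ n) : ValidEdges (V n) (E n) := by
  refine ⟨?_, ?_, ?_⟩
  · intro a b hab
    rcases mem_E_iff.mp hab with ⟨k, hk1, hk2, he⟩ | ⟨i, hi1, hi2, he⟩ <;>
      rcases Sym2.eq_iff.mp he with ⟨rfl, rfl⟩ | ⟨rfl, rfl⟩
    · exact ⟨P_mem_V (by omega), P_mem_V hk2, fun h => by have := P_inj h; omega⟩
    · exact ⟨P_mem_V hk2, P_mem_V (by omega), fun h => by have := P_inj h; omega⟩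
    · exact ⟨P_mem_V (by omega), P_mem_V (by omega), fun h => by have := P_inj h; omega⟩
    · exact ⟨P_mem_V (by omega), P_mem_V (by omega), fun h => by have := P_inj h; omega⟩
  · intro a b hab v hv
    obtain ⟨m, hm, rfl⟩ := mem_V_iff.mp hv
    rcases mem_E_iff.mp hab with ⟨k, hk1, hk2, he⟩ | ⟨i, hi1, hi2, he⟩ <;> rw [seg_of_eq he]
    · exact no_vertex_in_edge (by omega)
    · exact no_vertex_in_edge (by omega)
  · intro a b c d hab hcd hne
    rcases mem_E_iff.mp hab with ⟨k, hk1, hk2, he⟩ | ⟨i, hi1, hi2, he⟩ <;>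
      rcases mem_E_iff.mp hcd with ⟨k', hk1', hk2', he'⟩ | ⟨i', hi1', hi2', he'⟩ <;>
      rw [seg_of_eq he, seg_of_eq he']
    · exact fan_fan_disj hk1 hk1' (by rintro rfl; exact hne (he.trans he'.symm))
    · exact fan_chain_disj hk1 hi1'
    · rw [Set.inter_comm]; exact fan_chain_disj hk1' hi1
    · exact chain_chain_disj (by rintro rfl; exact hne (he.trans he'.symm))

def G (n : ℕ) (hn : 3 ≤ n) : PSLG := ⟨V n, E n, valid_E hn⟩

lemma card_V {n : ℕ} : (V n).card = n := by
  rw [V, Finset.card_image_of_injective _ P_inj, Finset.card_range]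

end DT

namespace DT

lemma cross_point {i j : ℕ} (hi : 1 ≤ i) (hij : i + 2 ≤ j) :
    ∃ z : Pt, z ∈ openSegment ℝ (P i) (P j) ∧ z ∈ openSegment ℝ (P 0) (P (i+1)) := by
  have hA : (1:ℝ) ≤ (i:ℝ) := by exact_mod_cast hi
  have hB : (i:ℝ) + 2 ≤ (j:ℝ) := by exact_mod_cast hij
  set A : ℝ := (i:ℝ) with hAdef
  set B : ℝ := (j:ℝ) with hBdef
  have hB1 : (0:ℝ) < B - 1 := by linarith
  have hA1 : (0:ℝ) < A + 1 := by linarith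
  have hBA : (0:ℝ) < B - A := by linarith
  set t : ℝ := A * B / ((B - 1) * (A + 1)) with htdef
  set s : ℝ := A / ((B - 1) * (B - A)) with hsdef
  have hA0 : (0:ℝ) < A := by linarith
  have hB0 : (0:ℝ) < B := by linarith
  have ht0 : 0 < t := div_pos (mul_pos hA0 hB0) (mul_pos hB1 hA1)
  have ht1 : t < 1 := by
    rw [htdef, div_lt_one (by positivity)]
    nlinarith
  have hs0 : 0 < s := div_pos hA0 (mul_pos hB1 hBA)
  have hs1 : s < 1 := by
    rw [hsdef, div_lt_one (by positivity)]
    nlinarith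
  have m1 := chord_mk (a := A) (b := B) hs0 hs1
  have m2 := chord_mk (a := ((0:ℕ):ℝ)) (b := ((i+1:ℕ):ℝ)) ht0 ht1
  refine ⟨((1-s)*A + s*B, (1-s)*A^2 + s*B^2), ?_, ?_⟩
  · rw [openSeg_P]; exact m1
  · rw [openSeg_P]
    have hpt : (((1-s)*A + s*B, (1-s)*A^2 + s*B^2) : Pt)
        = ((1-t)*((0:ℕ):ℝ) + t*((i+1:ℕ):ℝ), (1-t)*((0:ℕ):ℝ)^2 + t*((i+1:ℕ):ℝ)^2) := by
      have e1 : ((i+1:ℕ):ℝ) = A + 1 := by push_cast [hAdef]; ring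
      have e0 : ((0:ℕ):ℝ) = 0 := by norm_num
      rw [e1, e0, Prod.ext_iff]
      constructor
      · simp only [htdef, hsdef]
        field_simp
        ring
      · simp only [htdef, hsdef]
        field_simp
        ring
    rw [hpt]
    exact m2

lemma insert_not_valid {n i j : ℕ} (hi : 1 ≤ i) (hij : i + 2 ≤ j) (hj : j < n) :
    ¬ ValidEdges (V n) (insert s(P i, P j) (E n)) := by
  intro hV
  have hfan : s(P 0, P (i+1)) ∈ E n :=
    mem_E_iff.mpr (Or.inl ⟨i+1, by omega, by omega, rfl⟩)
  have hne : s(P i, P j) ≠ s(P 0, P (i+1)) := by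
    intro h
    rcases Sym2.eq_iff.mp h with ⟨h1, h2⟩ | ⟨h1, h2⟩
    · have := P_inj h1; omega
    · have := P_inj h2; omega
  have hdisj := hV.2.2 (P i) (P j) (P 0) (P (i+1)) (Finset.mem_insert_self _ _)
    (Finset.mem_insert_of_mem hfan) hne
  obtain ⟨z, hz1, hz2⟩ := cross_point hi hij
  have : z ∈ (∅ : Set Pt) := hdisj ▸ Set.mem_inter hz1 hz2
  exact this

lemma G_isTriangulation {n : ℕ} (hn : 3 ≤ n) : (G n hn).IsTriangulation := by
  intro a ha b hb hab hnot
  obtain ⟨i, hi, rfl⟩ := mem_V_iff.mp ha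
  obtain ⟨j, hj, rfl⟩ := mem_V_iff.mp hb
  have hij : i ≠ j := fun h => hab (congrArg P h)
  show ¬ ValidEdges (V n) (insert s(P i, P j) (E n))
  rcases Nat.lt_or_ge i j with h | h
  · -- i < j
    have hi1 : 1 ≤ i := by
      by_contra h0
      have : i = 0 := by omega
      subst this
      exact hnot (mem_E_iff.mpr (Or.inl ⟨j, by omega, hj, rfl⟩))
    have hij2 : i + 2 ≤ j := by
      by_contra h0
      have : j = i + 1 := by omega
      subst this
      exact hnot (mem_E_iff.mpr (Or.inr ⟨i, hi1, hj, rfl⟩))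
    exact insert_not_valid hi1 hij2 hj
  · -- j < i
    have hlt : j < i := by omega
    have hswap : s(P i, P j) = s(P j, P i) := Sym2.eq_swap
    rw [hswap]
    have hnot' : s(P j, P i) ∉ E n := fun h => hnot (hswap ▸ h)
    have hj1 : 1 ≤ j := by
      by_contra h0
      have : j = 0 := by omega
      subst this
      exact hnot' (mem_E_iff.mpr (Or.inl ⟨i, by omega, hi, rfl⟩))
    have hij2 : j + 2 ≤ i := by
      by_contra h0
      have : i = j + 1 := by omega
      subst this
      exact hnot' (mem_E_iff.mpr (Or.inr ⟨j, hj1, hi, rfl⟩))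
    exact insert_not_valid hj1 hij2 hi

end DT

namespace DT

def c (i : ℕ) : Pt × Pt := if i % 2 = 0 then (P i, P (i+1)) else (P (i+1), P i)
def fanD (n : ℕ) : Finset (Pt × Pt) := (Finset.Ico 1 n).image (fun i => (P i, P 0))
def chainD (n : ℕ) : Finset (Pt × Pt) := (Finset.Ico 1 (n-1)).image c
def D (n : ℕ) : Finset (Pt × Pt) := fanD n ∪ chainD n

lemma c_cases (j : ℕ) : (j % 2 = 0 ∧ c j = (P j, P (j+1))) ∨ (j % 2 = 1 ∧ c j = (P (j+1), P j)) := by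
  rcases Nat.even_or_odd j with h | h
  · left; have : j % 2 = 0 := Nat.even_iff.mp h
    exact ⟨this, by simp [c, this]⟩
  · right; have : j % 2 = 1 := Nat.odd_iff.mp h
    exact ⟨this, by simp [c, this]⟩

lemma mem_D_iff {n : ℕ} {p : Pt × Pt} : p ∈ D n ↔
    (∃ i, 1 ≤ i ∧ i < n ∧ p = (P i, P 0)) ∨ (∃ i, 1 ≤ i ∧ i + 1 < n ∧ p = c i) := by
  simp only [D, Finset.mem_union, fanD, chainD, Finset.mem_image, Finset.mem_Ico]
  constructor
  · rintro (⟨i, ⟨h1, h2⟩, rfl⟩ | ⟨i, ⟨h1, h2⟩, rfl⟩)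
    · exact Or.inl ⟨i, h1, h2, rfl⟩
    · exact Or.inr ⟨i, h1, by omega, rfl⟩
  · rintro (⟨i, h1, h2, rfl⟩ | ⟨i, h1, h2, rfl⟩)
    · exact Or.inl ⟨i, ⟨h1, h2⟩, rfl⟩
    · exact Or.inr ⟨i, ⟨h1, by omega⟩, rfl⟩

lemma P0_fst : (P 0).1 = 0 := by simp [P]

lemma src_ne_P0 {n : ℕ} {p : Pt × Pt} (hp : p ∈ D n) : p.1 ≠ P 0 := by
  rcases mem_D_iff.mp hp with ⟨i, h1, h2, rfl⟩ | ⟨i, h1, h2, rfl⟩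
  · intro h; have := P_inj h; omega
  · rcases c_cases i with ⟨_, hc⟩ | ⟨_, hc⟩ <;> rw [hc] <;>
      · intro h; have := P_inj h; omega

lemma pair_eq_c {x y j : ℕ} (h : (P x, P y) = c j) :
    (j % 2 = 0 ∧ x = j ∧ y = j + 1) ∨ (j % 2 = 1 ∧ x = j + 1 ∧ y = j) := by
  rcases c_cases j with ⟨hp, hc⟩ | ⟨hp, hc⟩ <;> rw [hc] at h
  · exact Or.inl ⟨hp, P_inj (congrArg Prod.fst h), P_inj (congrArg Prod.snd h)⟩
  · exact Or.inr ⟨hp, P_inj (congrArg Prod.fst h), P_inj (congrArg Prod.snd h)⟩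

lemma pair_mem_D {n x y : ℕ} (h : (P x, P y) ∈ D n) :
    (1 ≤ x ∧ x < n ∧ y = 0) ∨
    (∃ j, 1 ≤ j ∧ j + 1 < n ∧ ((j % 2 = 0 ∧ x = j ∧ y = j + 1) ∨ (j % 2 = 1 ∧ x = j + 1 ∧ y = j))) := by
  rcases mem_D_iff.mp h with ⟨i, h1, h2, hp⟩ | ⟨i, h1, h2, hp⟩
  · exact Or.inl ⟨by rw [P_inj (congrArg Prod.fst hp)]; exact h1,
      by rw [P_inj (congrArg Prod.fst hp)]; exact h2, P_inj (congrArg Prod.snd hp)⟩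
  · exact Or.inr ⟨i, h1, h2, pair_eq_c hp⟩

lemma orientation_D {n : ℕ} (hn : 3 ≤ n) : IsOrientation (G n hn) (D n) := by
  constructor
  · intro p hp
    rcases mem_D_iff.mp hp with ⟨i, h1, h2, rfl⟩ | ⟨i, h1, h2, rfl⟩
    · exact mem_E_iff.mpr (Or.inl ⟨i, h1, h2, Sym2.eq_swap⟩)
    · rcases c_cases i with ⟨_, hc⟩ | ⟨_, hc⟩ <;> rw [hc] <;>
        exact mem_E_iff.mpr (Or.inr ⟨i, h1, h2, by first | rfl | exact Sym2.eq_swap⟩)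
  · intro a b hab
    rcases mem_E_iff.mp hab with ⟨k, hk1, hk2, he⟩ | ⟨i, hi1, hi2, he⟩
    · have hmem : (P k, P 0) ∈ D n := mem_D_iff.mpr (Or.inl ⟨k, hk1, hk2, rfl⟩)
      have hnot : (P 0, P k) ∉ D n := fun h => by
        rcases pair_mem_D h with ⟨h1, _⟩ | ⟨j, hj1, _, hj⟩
        · omega
        · omega
      rcases Sym2.eq_iff.mp he with ⟨rfl, rfl⟩ | ⟨rfl, rfl⟩
      · exact Or.inr ⟨hmem, hnot⟩
      · exact Or.inl ⟨hmem, hnot⟩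
    · have hciD : c i ∈ D n := mem_D_iff.mpr (Or.inr ⟨i, hi1, hi2, rfl⟩)
      have key : ((P i, P (i+1)) ∈ D n ∧ (P (i+1), P i) ∉ D n) ∨
          ((P (i+1), P i) ∈ D n ∧ (P i, P (i+1)) ∉ D n) := by
        rcases c_cases i with ⟨hp, hc⟩ | ⟨hp, hc⟩
        · left
          refine ⟨hc ▸ hciD, fun h => ?_⟩
          rcases pair_mem_D h with ⟨_, _, h0⟩ | ⟨j, _, _, hj⟩
          · omega
          · omega
        · right
          refine ⟨hc ▸ hciD, fun h => ?_⟩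
          rcases pair_mem_D h with ⟨_, _, h0⟩ | ⟨j, _, _, hj⟩
          · omega
          · omega
      rcases Sym2.eq_iff.mp he with ⟨rfl, rfl⟩ | ⟨rfl, rfl⟩
      · exact key.imp (fun h => ⟨h.1, h.2⟩) (fun h => ⟨h.1, h.2⟩)
      · exact key.symm.imp (fun h => ⟨h.1, h.2⟩) (fun h => ⟨h.1, h.2⟩)

end DT

namespace DT

lemma c_inj : Function.Injective c := by
  intro i j h
  rcases c_cases i with ⟨hpi, hci⟩ | ⟨hpi, hci⟩ <;> rcases c_cases j with ⟨hpj, hcj⟩ | ⟨hpj, hcj⟩ <;>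
    rw [hci, hcj] at h <;>
    [skip; skip; skip; skip] <;>
    · have h1 := P_inj (congrArg Prod.fst h)
      have h2 := P_inj (congrArg Prod.snd h)
      omega

lemma two_step {n : ℕ} {x y z : Pt} (h1 : (x, y) ∈ D n) (h2 : (y, z) ∈ D n) :
    z = P 0 ∧ ∃ j, 1 ≤ j ∧ j + 1 < n ∧ (x, y) = c j := by
  rcases mem_D_iff.mp h1 with ⟨i, hi1, hi2, hp⟩ | ⟨i, hi1, hi2, hp⟩
  · exact absurd (congrArg Prod.snd hp) (src_ne_P0 h2)
  · rcases mem_D_iff.mp h2 with ⟨m, hm1, hm2, hq⟩ | ⟨m, hm1, hm2, hq⟩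
    · exact ⟨congrArg Prod.snd hq, i, hi1, hi2, hp⟩
    · exfalso
      have hy1 : y = (c i).2 := by rw [← hp]
      have hy2 : y = (c m).1 := by rw [← hq]
      rcases c_cases i with ⟨hpi, hci⟩ | ⟨hpi, hci⟩ <;> rcases c_cases m with ⟨hpm, hcm⟩ | ⟨hpm, hcm⟩ <;>
        rw [hci] at hy1 <;> rw [hcm] at hy2 <;>
        · have := P_inj (hy1.symm.trans hy2)
          omega

lemma no_three_steps {n : ℕ} {a b c' d : Pt} (h1 : (a, b) ∈ D n) (h2 : (b, c') ∈ D n)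
    (h3 : (c', d) ∈ D n) : False := by
  have t := two_step h1 h2
  exact src_ne_P0 h3 t.1

lemma length_le_three {n : ℕ} (L : List Pt) (h : IsDirPath (D n) L) : L.length ≤ 3 := by
  by_contra hlen
  push_neg at hlen
  match L, hlen with
  | a :: b :: c' :: d :: t, _ =>
    have hc := h.2.2
    simp only [List.Chain', List.isChain_cons_cons] at hc
    exact no_three_steps hc.1 hc.2.1 hc.2.2.1

def S2 (n : ℕ) : Finset (List Pt) := (D n).image (fun p => [p.1, p.2])
def S3 (n : ℕ) : Finset (List Pt) := (Finset.Ico 1 (n-1)).image (fun i => [(c i).1, (c i).2, P 0])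

lemma D_pair_ne {n : ℕ} {p : Pt × Pt} (hp : p ∈ D n) : p.1 ≠ p.2 := by
  rcases mem_D_iff.mp hp with ⟨i, h1, h2, rfl⟩ | ⟨i, h1, h2, rfl⟩
  · intro h; have := P_inj h; omega
  · rcases c_cases i with ⟨_, hc⟩ | ⟨_, hc⟩ <;> rw [hc] <;>
      · intro h; have := P_inj h; omega

lemma S2_char {n : ℕ} : {L : List Pt | IsDirPath (D n) L ∧ L.length = 2} = ↑(S2 n) := by
  ext L
  simp only [Set.mem_setOf_eq, Finset.coe_image, Set.mem_image, Finset.mem_coe, S2,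
    Finset.mem_image]
  constructor
  · rintro ⟨⟨hlen, hnd, hch⟩, hl2⟩
    match L, hl2 with
    | [a, b], _ =>
      simp only [List.Chain', List.isChain_cons_cons, List.isChain_singleton, and_true] at hch
      exact ⟨(a, b), hch, rfl⟩
  · rintro ⟨p, hp, rfl⟩
    refine ⟨⟨by simp, by simp [D_pair_ne hp], ?_⟩, by simp⟩
    simp only [List.Chain', List.isChain_cons_cons, List.isChain_singleton, and_true]
    exact hp

lemma S3_char {n : ℕ} : {L : List Pt | IsDirPath (D n) L ∧ L.length = 3} = ↑(S3 n) := by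
  ext L
  simp only [Set.mem_setOf_eq, Finset.mem_coe, S3, Finset.mem_image, Finset.mem_Ico]
  constructor
  · rintro ⟨⟨hlen, hnd, hch⟩, hl3⟩
    match L, hl3 with
    | [a, b, d], _ =>
      simp only [List.Chain', List.isChain_cons_cons, List.isChain_singleton, and_true] at hch
      obtain ⟨hd, j, hj1, hj2, hab⟩ := two_step hch.1 hch.2
      refine ⟨j, ⟨hj1, by omega⟩, ?_⟩
      have ha : a = (c j).1 := by rw [← hab]
      have hb : b = (c j).2 := by rw [← hab]
      rw [ha, hb, hd]
  · rintro ⟨j, ⟨hj1, hj2⟩, rfl⟩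
    have hj2' : j + 1 < n := by omega
    have hcj : c j ∈ D n := mem_D_iff.mpr (Or.inr ⟨j, hj1, hj2', rfl⟩)
    have h1 : ((c j).1, (c j).2) ∈ D n := by rwa [Prod.mk.eta]
    have h2 : ((c j).2, P 0) ∈ D n := by
      rcases c_cases j with ⟨_, hc⟩ | ⟨_, hc⟩ <;> rw [hc] <;>
        exact mem_D_iff.mpr (Or.inl ⟨_, by omega, by omega, rfl⟩)
    refine ⟨⟨by simp, ?_, ?_⟩, rfl⟩
    · have hne : ∀ x y : ℕ, x ≠ y → P x ≠ P y := fun x y hxy h => hxy (P_inj h)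
      rcases c_cases j with ⟨_, hc⟩ | ⟨_, hc⟩
      · rw [hc]
        simp [List.nodup_cons, hne j (j+1) (by omega), hne j 0 (by omega),
          hne (j+1) 0 (by omega)]
      · rw [hc]
        simp [List.nodup_cons, hne (j+1) j (by omega), hne j 0 (by omega),
          hne (j+1) 0 (by omega)]
    · simp only [List.Chain', List.isChain_cons_cons, List.isChain_singleton, and_true]
      exact ⟨h1, h2⟩

lemma card_D {n : ℕ} (hn : 3 ≤ n) : (D n).card = 2 * n - 3 := by
  have hdisj : Disjoint (fanD n) (chainD n) := by
    rw [Finset.disjoint_left]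
    intro p hf hc
    simp only [fanD, Finset.mem_image, Finset.mem_Ico] at hf
    simp only [chainD, Finset.mem_image, Finset.mem_Ico] at hc
    obtain ⟨i, hi, rfl⟩ := hf
    obtain ⟨j, hj, hcj⟩ := hc
    rcases pair_eq_c hcj.symm with ⟨_, _, h0⟩ | ⟨_, _, h0⟩ <;> omega
  rw [D, Finset.card_union_of_disjoint hdisj]
  have h1 : (fanD n).card = n - 1 := by
    rw [fanD, Finset.card_image_of_injective _ (fun i j h => P_inj (congrArg Prod.fst h)),
      Nat.card_Ico]
  have h2 : (chainD n).card = n - 2 := by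
    rw [chainD, Finset.card_image_of_injective _ c_inj, Nat.card_Ico]
    omega
  omega

lemma card_S2 {n : ℕ} (hn : 3 ≤ n) : (S2 n).card = 2 * n - 3 := by
  rw [S2, Finset.card_image_of_injective _ (fun p q h => by
    simp only [List.cons.injEq, and_true] at h
    exact Prod.ext h.1 h.2), card_D hn]

lemma card_S3 {n : ℕ} (hn : 3 ≤ n) : (S3 n).card = n - 2 := by
  rw [S3, Finset.card_image_of_injOn (fun i _ j _ h => by
    simp only [List.cons.injEq, and_true] at h
    exact c_inj (Prod.ext h.1 h.2)), Nat.card_Ico]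
  omega

end DT
/-- for every `n ≥ 3` there is an oriented triangulation of `n` points
with exactly `3n − 5` directed simple paths: `2n − 3` of length 1, `n − 2` of length 2,
and none longer. -/
theorem directed_triangulation_tight (n : ℕ) (hn : 3 ≤ n) :
    ∃ (G : PSLG) (D : Finset (Pt × Pt)),
      G.IsTriangulation ∧ G.V.card = n ∧ IsOrientation G D ∧
      Set.ncard {L : List Pt | IsDirPath D L ∧ L.length = 2} = 2 * n - 3 ∧
      Set.ncard {L : List Pt | IsDirPath D L ∧ L.length = 3} = n - 2 ∧
      (∀ L : List Pt, IsDirPath D L → L.length ≤ 3) ∧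
      dirPathCount D = 3 * n - 5 := by
  refine ⟨DT.G n hn, DT.D n, DT.G_isTriangulation hn, DT.card_V, DT.orientation_D hn, ?_, ?_,
    DT.length_le_three, ?_⟩
  · rw [DT.S2_char, Set.ncard_coe_finset, DT.card_S2 hn]
  · rw [DT.S3_char, Set.ncard_coe_finset, DT.card_S3 hn]
  · have hdisj : Disjoint (DT.S2 n) (DT.S3 n) := by
      rw [Finset.disjoint_left]
      intro L h2 h3
      simp only [DT.S2, DT.S3, Finset.mem_image] at h2 h3
      obtain ⟨p, _, rfl⟩ := h2
      obtain ⟨j, _, hj⟩ := h3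
      simpa using congrArg List.length hj
    have hset : {L : List Pt | IsDirPath (DT.D n) L} = ↑(DT.S2 n ∪ DT.S3 n) := by
      ext L
      simp only [Set.mem_setOf_eq, Finset.coe_union, Set.mem_union]
      constructor
      · intro h
        have h2 := h.1
        have h3 := DT.length_le_three L h
        rcases (by omega : L.length = 2 ∨ L.length = 3) with hl | hl
        · exact Or.inl ((Set.ext_iff.mp DT.S2_char L).mp ⟨h, hl⟩)
        · exact Or.inr ((Set.ext_iff.mp DT.S3_char L).mp ⟨h, hl⟩)
      · rintro (hL | hL)
        · exact ((Set.ext_iff.mp DT.S2_char L).mpr hL).1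
        · exact ((Set.ext_iff.mp DT.S3_char L).mpr hL).1
    rw [dirPathCount, hset, Set.ncard_coe_finset, Finset.card_union_of_disjoint hdisj,
      DT.card_S2 hn, DT.card_S3 hn]
    omega

end
end
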